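/- For each i, j ≥ 0, the Brown-Gitler subspace N_i(j) ⊆ (A // A(i))_*, defined as the span of all monomials of Brown-Gitler filtration at most 2^{i+1} j, is an A_*-subcomodule of (A // A(i))_*. -/

import Mathlib

open TensorProduct

/-- The mod 2 dual Steenrod algebra, presented as a polynomial algebra on the
conjugate Milnor generators: `MvPolynomial.X k` represents `ξ̄_{k+1}`. -/
abbrev DualSteenrod : Type := MvPolynomial ℕ (ZMod 2)

/-- `xb k` is the conjugate Milnor generator `ξ̄_k`, with `ξ̄_0 = 1`. -/
noncomputable def xb : ℕ → DualSteenrod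
  | 0 => 1
  | k + 1 => MvPolynomial.X k

/-- The coproduct of the dual Steenrod algebra, given on the conjugate generators
by `ψ(ξ̄_k) = Σ_{k₁+k₂=k} ξ̄_{k₁} ⊗ ξ̄_{k₂}^{2^{k₁}}`. -/
noncomputable def psi : DualSteenrod →ₐ[ZMod 2] DualSteenrod ⊗[ZMod 2] DualSteenrod :=
  MvPolynomial.aeval fun n =>
    ∑ p ∈ Finset.range (n + 2), (xb p) ⊗ₜ[ZMod 2] ((xb (n + 1 - p)) ^ (2 ^ p))

/-- The Brown-Gitler weight of a monomial: `ξ̄_{k+1}` (the variable `X k`) has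
weight `2^k`. -/
def bgWeight (d : ℕ →₀ ℕ) : ℕ := d.sum fun k e => e * 2 ^ k

/-- The condition for a monomial to lie in `(A ⫽ A(i))_*`: the exponent of
`ξ̄_{k+1}` must be divisible by `2^{i+1-k}` (truncated subtraction). -/
def isAAmonomial (i : ℕ) (d : ℕ →₀ ℕ) : Prop := ∀ k, 2 ^ (i + 1 - k) ∣ d k

/-- The Brown-Gitler comodule `N_i(j)`: the span of the monomials of
`(A ⫽ A(i))_*` of Brown-Gitler filtration at most `2^{i+1} j`. -/
noncomputable def BrownGitler (i j : ℕ) : Submodule (ZMod 2) DualSteenrod :=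
  Submodule.span (ZMod 2)
    {m | ∃ d : ℕ →₀ ℕ, isAAmonomial i d ∧ bgWeight d ≤ 2 ^ (i + 1) * j ∧
      m = MvPolynomial.monomial d 1}

/-! ### Auxiliary machinery -/

noncomputable def Mspan (i w : ℕ) : Submodule (ZMod 2) (DualSteenrod ⊗[ZMod 2] DualSteenrod) :=
  Submodule.span (ZMod 2)
    {t | ∃ a : DualSteenrod, ∃ e : ℕ →₀ ℕ, isAAmonomial i e ∧ bgWeight e ≤ w ∧
      t = a ⊗ₜ[ZMod 2] MvPolynomial.monomial e 1}

lemma Mspan_mono (i : ℕ) {w w' : ℕ} (h : w ≤ w') : Mspan i w ≤ Mspan i w' := by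
  apply Submodule.span_mono
  rintro t ⟨a, e, h1, h2, h3⟩
  exact ⟨a, e, h1, h2.trans h, h3⟩

lemma bgWeight_add (d e : ℕ →₀ ℕ) : bgWeight (d + e) = bgWeight d + bgWeight e := by
  unfold bgWeight
  rw [Finsupp.sum_add_index] <;> simp [add_mul]

lemma isAAmonomial_add {i : ℕ} {d e : ℕ →₀ ℕ} (hd : isAAmonomial i d)
    (he : isAAmonomial i e) : isAAmonomial i (d + e) := by
  intro k
  simpa using dvd_add (hd k) (he k)

lemma isAAmonomial_zero (i : ℕ) : isAAmonomial i 0 := by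
  intro k; simp

lemma Mspan_mul {i w1 w2 : ℕ} {u v : DualSteenrod ⊗[ZMod 2] DualSteenrod}
    (hu : u ∈ Mspan i w1) (hv : v ∈ Mspan i w2) : u * v ∈ Mspan i (w1 + w2) := by
  induction hu using Submodule.span_induction with
  | mem u hu =>
    induction hv using Submodule.span_induction with
    | mem v hv =>
      obtain ⟨a, e, h1, h2, rfl⟩ := hu
      obtain ⟨a', e', h1', h2', rfl⟩ := hv
      apply Submodule.subset_span
      refine ⟨a * a', e + e', isAAmonomial_add h1 h1', ?_, ?_⟩
      · rw [bgWeight_add]; omega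
      · rw [Algebra.TensorProduct.tmul_mul_tmul, MvPolynomial.monomial_mul, one_mul]
    | zero => simp
    | add x y hx hy hx' hy' => rw [mul_add]; exact add_mem hx' hy'
    | smul c x hx hx' => rw [mul_smul_comm]; exact Submodule.smul_mem _ _ hx'
  | zero => simp
  | add x y hx hy hx' hy' => rw [add_mul]; exact add_mem hx' hy'
  | smul c x hx hx' => rw [smul_mul_assoc]; exact Submodule.smul_mem _ _ hx'

lemma Mspan_one (i : ℕ) : (1 : DualSteenrod ⊗[ZMod 2] DualSteenrod) ∈ Mspan i 0 := by
  apply Submodule.subset_span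
  refine ⟨1, 0, isAAmonomial_zero i, le_refl _, ?_⟩
  rw [MvPolynomial.monomial_zero', Algebra.TensorProduct.one_def]
  simp

lemma Mspan_pow {i w : ℕ} {u : DualSteenrod ⊗[ZMod 2] DualSteenrod}
    (hu : u ∈ Mspan i w) (m : ℕ) : u ^ m ∈ Mspan i (m * w) := by
  induction m with
  | zero => simpa using Mspan_one i
  | succ n ih =>
    rw [pow_succ, Nat.succ_mul]
    exact Mspan_mul ih hu

lemma charP_T : CharP (DualSteenrod ⊗[ZMod 2] DualSteenrod) 2 := by
  haveI : Nontrivial (DualSteenrod ⊗[ZMod 2] DualSteenrod) := by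
    refine ⟨1, 0, fun h => ?_⟩
    have := congrArg (Algebra.TensorProduct.lmul' (ZMod 2)
      (S := DualSteenrod)) h
    simp at this
  exact charP_of_injective_algebraMap' (ZMod 2) 2

lemma psi_X_pow_base (i k : ℕ) :
    psi (MvPolynomial.X k) ^ 2 ^ (i + 1 - k) ∈ Mspan i (2 ^ (i + 1 - k) * 2 ^ k) := by
  haveI := charP_T
  set s := i + 1 - k with hs
  have hpsi : psi (MvPolynomial.X k) =
      ∑ p ∈ Finset.range (k + 2), (xb p) ⊗ₜ[ZMod 2] ((xb (k + 1 - p)) ^ (2 ^ p)) := by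
    simp [psi]
  rw [hpsi, sum_pow_char_pow]
  apply Submodule.sum_mem
  intro p hp
  rw [Finset.mem_range] at hp
  rw [Algebra.TensorProduct.tmul_pow]
  apply Submodule.subset_span
  rcases Nat.lt_or_ge p (k + 1) with hpk | hpk
  · -- p ≤ k : right factor is X (k - p) ^ (2 ^ p * 2 ^ s)
    have hq : k + 1 - p = (k - p) + 1 := by omega
    rw [hq]
    refine ⟨xb p ^ 2 ^ s, Finsupp.single (k - p) (2 ^ (p + s)), ?_, ?_, ?_⟩
    · intro m
      rcases eq_or_ne m (k - p) with rfl | hm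
      · rw [Finsupp.single_eq_same]
        exact pow_dvd_pow 2 (by omega)
      · rw [Finsupp.single_eq_of_ne' (Ne.symm hm)]
        exact dvd_zero _
    · unfold bgWeight
      rw [Finsupp.sum_single_index (by simp), ← pow_add, ← pow_add]
      exact le_of_eq (congrArg (2 ^ ·) (by omega))
    · congr 1
      show (xb ((k - p) + 1) ^ 2 ^ p) ^ 2 ^ s = _
      rw [xb, ← pow_mul, ← pow_add, MvPolynomial.X_pow_eq_monomial]
  · -- p = k + 1 : right factor is 1
    have hp1 : p = k + 1 := by omega
    have hq : k + 1 - p = 0 := by omega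
    refine ⟨xb p ^ 2 ^ s, 0, isAAmonomial_zero i, Nat.zero_le _, ?_⟩
    rw [hq]
    congr 1
    show (xb 0 ^ 2 ^ p) ^ 2 ^ s = _
    rw [xb]
    simp [MvPolynomial.monomial_zero']

lemma psi_X_pow (i k e : ℕ) (he : 2 ^ (i + 1 - k) ∣ e) :
    psi (MvPolynomial.X k) ^ e ∈ Mspan i (e * 2 ^ k) := by
  obtain ⟨m, rfl⟩ := he
  rw [pow_mul]
  have := Mspan_pow (psi_X_pow_base i k) m
  rwa [show m * (2 ^ (i + 1 - k) * 2 ^ k) = 2 ^ (i + 1 - k) * m * 2 ^ k by ring] at this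

lemma psi_monomial (i : ℕ) (d : ℕ →₀ ℕ) (hd : isAAmonomial i d) :
    psi (MvPolynomial.monomial d 1) ∈ Mspan i (bgWeight d) := by
  rw [MvPolynomial.monomial_eq, map_one, one_mul]
  rw [Finsupp.prod, map_prod]
  unfold bgWeight
  rw [Finsupp.sum]
  -- product of terms
  have : ∀ s : Finset ℕ, (∀ k ∈ s, 2 ^ (i + 1 - k) ∣ d k) →
      (∏ k ∈ s, psi (MvPolynomial.X k ^ d k)) ∈ Mspan i (∑ k ∈ s, d k * 2 ^ k) := by
    intro s
    induction s using Finset.induction with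
    | empty => intro _; simpa using Mspan_one i
    | insert a s' hnotmem ih =>
      intro hdvd
      rw [Finset.prod_insert hnotmem, Finset.sum_insert hnotmem]
      refine Mspan_mul ?_ (ih fun k hk => hdvd k (Finset.mem_insert_of_mem hk))
      rw [map_pow]
      exact psi_X_pow i a (d a) (hdvd a (Finset.mem_insert_self a s'))
  exact this d.support fun k _ => hd k

/-- `N_i(j)` is an `A_*`-subcomodule of `(A ⫽ A(i))_*`, i.e. the
coproduct (coaction) of the dual Steenrod algebra takes `N_i(j)` into
`A_* ⊗ N_i(j)`. -/
theorem stmt4 (i j : ℕ) (x : DualSteenrod) (hx : x ∈ BrownGitler i j) :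
    psi x ∈ Submodule.span (ZMod 2)
      {t : DualSteenrod ⊗[ZMod 2] DualSteenrod |
        ∃ a : DualSteenrod, ∃ n ∈ BrownGitler i j, t = a ⊗ₜ[ZMod 2] n} := by
  induction hx using Submodule.span_induction with
  | mem m hm =>
    obtain ⟨d, h1, h2, rfl⟩ := hm
    have key := psi_monomial i d h1
    have hle : Mspan i (bgWeight d) ≤ Submodule.span (ZMod 2)
        {t : DualSteenrod ⊗[ZMod 2] DualSteenrod |
          ∃ a : DualSteenrod, ∃ n ∈ BrownGitler i j, t = a ⊗ₜ[ZMod 2] n} := by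
      rw [Mspan, Submodule.span_le]
      rintro t ⟨a, e, he1, he2, rfl⟩
      apply Submodule.subset_span
      exact ⟨a, MvPolynomial.monomial e 1,
        Submodule.subset_span ⟨e, he1, he2.trans h2, rfl⟩, rfl⟩
    exact hle key
  | zero => simp
  | add x y hx hy hx' hy' => rw [map_add]; exact add_mem hx' hy'
  | smul c x hx hx' =>
    rw [map_smul]; exact Submodule.smul_mem _ _ hx'
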